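/- arXiv:1501.01836 — 3 statements merged into one kernel-verified Lean document; each statement's English description precedes it below -/
import Mathlib

section
/- If g and g' are inner products on V such that g' v v ≥ g v v for every v ∈ V, then for every alternating m-form φ on V one has comass g' φ ≤ comass g φ. -/
open Matrix

/-- The Gram matrix of an `m`-tuple of vectors with respect to a bilinear form `g`. -/
noncomputable def gramMat {V : Type*} [AddCommGroup V] [Module ℝ V] (m : ℕ)
    (g : LinearMap.BilinForm ℝ V) (v : Fin m → V) : Matrix (Fin m) (Fin m) ℝ :=
  Matrix.of fun i j => g (v i) (v j)

/-- The comass of an alternating `m`-form `φ` with respect to a bilinear form `g`. -/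
noncomputable def comass {V : Type*} [AddCommGroup V] [Module ℝ V] (m : ℕ)
    (g : LinearMap.BilinForm ℝ V) (φ : V [⋀^Fin m]→ₗ[ℝ] ℝ) : ℝ :=
  sSup {x : ℝ | ∃ v : Fin m → V, (gramMat m g v).det ≠ 0 ∧
    x = φ v / Real.sqrt (gramMat m g v).det}

section Aux

lemma det_one_add_posSemidef {n : ℕ} {M : Matrix (Fin n) (Fin n) ℝ} (hM : M.PosSemidef) :
    1 ≤ (1 + M).det := by
  have hH := hM.isHermitian
  have hspec := hH.spectral_theorem
  set U : Matrix (Fin n) (Fin n) ℝ := (hH.eigenvectorUnitary : Matrix (Fin n) (Fin n) ℝ)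
  have hUU : U * star U = 1 := (Matrix.mem_unitaryGroup_iff).mp hH.eigenvectorUnitary.2
  have hdsum : diagonal (fun i => (1 : ℝ) + hH.eigenvalues i)
      = 1 + diagonal (fun i => hH.eigenvalues i) := by
    rw [← diagonal_one, diagonal_add]
  have hone : (1 : Matrix (Fin n) (Fin n) ℝ) + M
      = U * diagonal (fun i => 1 + hH.eigenvalues i) * star U := by
    have hco : (RCLike.ofReal ∘ hH.eigenvalues : Fin n → ℝ) = fun i => hH.eigenvalues i := by
      funext i; simp
    rw [hco, Unitary.conjStarAlgAut_apply] at hspec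
    rw [hdsum, mul_add, add_mul, ← hspec, mul_one, hUU]
  rw [hone, det_mul, det_mul]
  have hdetUU : det U * det (star U) = 1 := by
    rw [← det_mul, hUU]; simp
  have hD : 1 ≤ det (diagonal fun i => 1 + hH.eigenvalues i) := by
    rw [det_diagonal]
    have : (1:ℝ) = ∏ _i : Fin n, (1:ℝ) := by simp
    rw [this]
    refine Finset.prod_le_prod (fun i _ => by norm_num) fun i _ => ?_
    have := hM.eigenvalues_nonneg i
    linarith
  calc (1:ℝ) = det U * det (star U) := hdetUU.symm
    _ ≤ (det U * det (star U)) * det (diagonal fun i => 1 + hH.eigenvalues i) := by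
        nlinarith [hD]
    _ = det U * det (diagonal fun i => 1 + hH.eigenvalues i) * det (star U) := by ring

open scoped MatrixOrder in
lemma det_le_det_add_posSemidef {n : ℕ} {A C : Matrix (Fin n) (Fin n) ℝ}
    (hA : A.PosDef) (hC : C.PosSemidef) : A.det ≤ (A + C).det := by
  set S := CFC.sqrt A with hSdef
  have hS : S.PosSemidef := (CFC.sqrt_nonneg A).posSemidef
  have hSS : S * S = A := CFC.sqrt_mul_sqrt_self A hA.posSemidef.nonneg
  have hdetS : det S * det S = det A := by rw [← det_mul, hSS]
  have hdetA : 0 < det A := hA.det_pos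
  have hdetSne : IsUnit (det S) := by
    refine isUnit_iff_ne_zero.mpr fun h => ?_
    rw [h, mul_zero] at hdetS
    exact hdetA.ne' hdetS.symm
  have hSinv : S * S⁻¹ = 1 := mul_nonsing_inv S hdetSne
  have hSinv' : S⁻¹ * S = 1 := nonsing_inv_mul S hdetSne
  have hM : ((S⁻¹)ᴴ * C * S⁻¹).PosSemidef := hC.conjTranspose_mul_mul_same _
  have hherm : (S⁻¹)ᴴ = S⁻¹ := by
    rw [conjTranspose_nonsing_inv, hS.isHermitian.eq]
  rw [hherm] at hM
  have key : A + C = S * (1 + S⁻¹ * C * S⁻¹) * S := by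
    rw [mul_add, add_mul, mul_one, hSS]
    congr 1
    calc C = 1 * C * 1 := by rw [one_mul, mul_one]
      _ = (S * S⁻¹) * C * (S⁻¹ * S) := by rw [hSinv, hSinv']
      _ = S * (S⁻¹ * C * S⁻¹) * S := by noncomm_ring
  rw [key, det_mul, det_mul]
  have h1 := det_one_add_posSemidef hM
  nlinarith [hdetS, hdetA, h1]

variable {V : Type*} [AddCommGroup V] [Module ℝ V] {m : ℕ}

lemma gram_dot (g : LinearMap.BilinForm ℝ V) (v : Fin m → V) (x : Fin m → ℝ) :
    x ⬝ᵥ (gramMat m g v *ᵥ x) = g (∑ i, x i • v i) (∑ j, x j • v j) := by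
  simp only [dotProduct, mulVec, gramMat, of_apply, map_sum, LinearMap.map_smul,
    _root_.map_smul, LinearMap.sum_apply, LinearMap.smul_apply, smul_eq_mul, Finset.mul_sum]
  rw [Finset.sum_comm]
  refine Finset.sum_congr rfl fun i _ => Finset.sum_congr rfl fun j _ => by ring

lemma gram_posSemidef {g : LinearMap.BilinForm ℝ V} (hsymm : g.IsSymm)
    (hpos : ∀ u : V, 0 ≤ g u u) (v : Fin m → V) : (gramMat m g v).PosSemidef := by
  rw [Matrix.posSemidef_iff_dotProduct_mulVec]
  constructor
  · ext i j
    simpa [gramMat, conjTranspose] using (hsymm.eq (v j) (v i))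
  · intro x
    simpa [gram_dot] using hpos (∑ i, x i • v i)

lemma gram_posDef {g : LinearMap.BilinForm ℝ V} (hsymm : g.IsSymm)
    (hpos : ∀ u : V, u ≠ 0 → 0 < g u u) {v : Fin m → V}
    (hv : LinearIndependent ℝ v) : (gramMat m g v).PosDef := by
  refine Matrix.posDef_iff_dotProduct_mulVec.mpr ⟨(gram_posSemidef hsymm (fun u => ?_) v).1, fun x hx => ?_⟩
  · rcases eq_or_ne u 0 with rfl | h
    · simp
    · exact (hpos u h).le
  · have hne : (∑ i, x i • v i) ≠ 0 := by
      intro h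
      apply hx
      funext i
      exact (Fintype.linearIndependent_iff.mp hv) x h i
    simpa [gram_dot] using hpos _ hne

lemma gram_det_eq_zero {g : LinearMap.BilinForm ℝ V} {v : Fin m → V}
    (hv : ¬ LinearIndependent ℝ v) : (gramMat m g v).det = 0 := by
  obtain ⟨c, hsum, i0, hci0⟩ := Fintype.not_linearIndependent_iff.mp hv
  refine (Matrix.exists_mulVec_eq_zero_iff).mp ⟨c, fun h => hci0 (by rw [h]; rfl), ?_⟩
  funext i
  have : (gramMat m g v *ᵥ c) i = g (v i) (∑ j, c j • v j) := by
    simp only [mulVec, dotProduct, gramMat, of_apply, map_sum, _root_.map_smul, smul_eq_mul]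
    exact Finset.sum_congr rfl fun j _ => by ring
  rw [Pi.zero_apply, this, hsum, map_zero]

lemma linearIndependent_of_gram_det_ne_zero {g : LinearMap.BilinForm ℝ V} {v : Fin m → V}
    (h : (gramMat m g v).det ≠ 0) : LinearIndependent ℝ v := by
  by_contra hv
  exact h (gram_det_eq_zero hv)

lemma gram_update_neg (g : LinearMap.BilinForm ℝ V) (v : Fin m → V) (i0 : Fin m) :
    (gramMat m g (Function.update v i0 (-(v i0)))).det = (gramMat m g v).det := by
  classical
  set D : Matrix (Fin m) (Fin m) ℝ := diagonal (fun j => if j = i0 then (-1 : ℝ) else 1) with hD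
  have hDD : D * D = 1 := by
    rw [hD, diagonal_mul_diagonal]
    convert diagonal_one using 2
    funext j
    split_ifs <;> norm_num
  have key : gramMat m g (Function.update v i0 (-(v i0))) = D * gramMat m g v * D := by
    ext j k
    rw [Matrix.mul_diagonal, Matrix.diagonal_mul]
    simp only [gramMat, of_apply, Function.update_apply]
    split_ifs with h1 h2 h3 <;> subst_vars <;> simp
  rw [key, det_mul, det_mul, mul_right_comm, ← det_mul, hDD, det_one, one_mul]

lemma phi_update_neg (φ : V [⋀^Fin m]→ₗ[ℝ] ℝ) (v : Fin m → V) (i0 : Fin m) :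
    φ (Function.update v i0 (-(v i0))) = - φ v := by
  have := φ.toMultilinearMap.map_update_neg v i0 (v i0)
  simp only [Function.update_eq_self] at this
  exact this

lemma bilin_expand {n : ℕ} (B : LinearMap.BilinForm ℝ V) (c : Fin n → ℝ) (b : Fin n → V) :
    B (∑ i, c i • b i) (∑ j, c j • b j) = ∑ i, ∑ j, c i * c j * B (b i) (b j) := by
  simp only [map_sum, LinearMap.map_smul, _root_.map_smul, LinearMap.sum_apply,
    LinearMap.smul_apply, smul_eq_mul, Finset.mul_sum]
  rw [Finset.sum_comm]
  exact Finset.sum_congr rfl fun i _ => Finset.sum_congr rfl fun j _ => by ring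

lemma exists_comparison [FiniteDimensional ℝ V] (hn : 0 < Module.finrank ℝ V)
    {g : LinearMap.BilinForm ℝ V} (hgsymm : g.IsSymm) (hgpos : ∀ v : V, v ≠ 0 → 0 < g v v)
    (g' : LinearMap.BilinForm ℝ V) :
    ∃ C : ℝ, 1 ≤ C ∧ ∀ u : V, g' u u ≤ C * g u u := by
  obtain ⟨b, hb⟩ := LinearMap.BilinForm.exists_orthogonal_basis (LinearMap.BilinForm.isSymm_iff.mp hgsymm)
  haveI : Nonempty (Fin (Module.finrank ℝ V)) := Fin.pos_iff_nonempty.mp hn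
  set d : Fin (Module.finrank ℝ V) → ℝ := fun i => g (b i) (b i) with hd
  have hdpos : ∀ i, 0 < d i := fun i => hgpos _ (b.ne_zero i)
  set δ : ℝ := Finset.univ.inf' Finset.univ_nonempty d with hδ
  have hδpos : 0 < δ := by
    rw [hδ, Finset.lt_inf'_iff]
    exact fun i _ => hdpos i
  have hδle : ∀ i, δ ≤ d i := fun i => Finset.inf'_le _ (Finset.mem_univ i)
  set K : ℝ := ∑ i, ∑ j, |g' (b i) (b j)| with hK
  have hK0 : 0 ≤ K := Finset.sum_nonneg fun i _ => Finset.sum_nonneg fun j _ => abs_nonneg _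
  refine ⟨max 1 (K / δ), le_max_left _ _, fun u => ?_⟩
  set c : Fin (Module.finrank ℝ V) → ℝ := fun i => b.repr u i with hc
  have hu : ∑ i, c i • b i = u := b.sum_repr u
  set S : ℝ := ∑ k, (c k)^2 with hS
  have hcsq : ∀ i, (c i)^2 ≤ S :=
    fun i => Finset.single_le_sum (f := fun k => (c k)^2) (fun k _ => sq_nonneg _)
      (Finset.mem_univ i)
  have hguu : g u u = ∑ i, (c i)^2 * d i := by
    rw [← hu, bilin_expand]
    refine Finset.sum_congr rfl fun i _ => ?_
    rw [Finset.sum_eq_single i]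
    · ring
    · intro j _ hji
      have h0 : g (b i) (b j) = 0 := by
        have := hb hji.symm
        simpa [Function.onFun, LinearMap.IsOrtho] using this
      rw [h0, mul_zero]
    · intro h; exact absurd (Finset.mem_univ i) h
  have hg0 : 0 ≤ g u u := by
    rcases eq_or_ne u 0 with rfl | h
    · simp
    · exact (hgpos u h).le
  have hSle : δ * S ≤ g u u := by
    rw [hguu, hS, Finset.mul_sum]
    refine Finset.sum_le_sum fun i _ => ?_
    have := hδle i
    nlinarith [sq_nonneg (c i)]
  have hg'le : g' u u ≤ K * S := by
    rw [← hu, bilin_expand, hK, Finset.sum_mul]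
    refine Finset.sum_le_sum fun i _ => ?_
    rw [Finset.sum_mul]
    refine Finset.sum_le_sum fun j _ => ?_
    have h1 : c i * c j * g' (b i) (b j) ≤ |c i| * |c j| * |g' (b i) (b j)| := by
      rw [← abs_mul, ← abs_mul]
      exact le_abs_self _
    have h2 : |c i| * |c j| ≤ S := by
      nlinarith [hcsq i, hcsq j, sq_abs (c i), sq_abs (c j), sq_nonneg (|c i| - |c j|)]
    nlinarith [abs_nonneg (g' (b i) (b j)), abs_nonneg (c i), abs_nonneg (c j)]
  have hfin : g' u u ≤ (K / δ) * g u u := by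
    rw [div_mul_eq_mul_div, le_div_iff₀ hδpos]
    nlinarith [hSle, hg'le, hK0]
  calc g' u u ≤ (K / δ) * g u u := hfin
    _ ≤ max 1 (K / δ) * g u u := mul_le_mul_of_nonneg_right (le_max_right _ _) hg0

lemma isSymm_sub {g g' : LinearMap.BilinForm ℝ V} (hg : g.IsSymm) (hg' : g'.IsSymm) :
    (g' - g).IsSymm := by
  refine ⟨fun x y => ?_⟩
  simp only [LinearMap.sub_apply, map_sub]
  have h1 := hg.eq x y
  have h2 := hg'.eq x y
  rw [h1, h2]

lemma isSymm_smul {g : LinearMap.BilinForm ℝ V} (hg : g.IsSymm) (C : ℝ) :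
    (C • g).IsSymm := by
  refine ⟨fun x y => ?_⟩
  have h1 := hg.eq x y
  simp [LinearMap.smul_apply, h1]

lemma gram_sub_add (g g' : LinearMap.BilinForm ℝ V) (v : Fin m → V) :
    gramMat m g v + gramMat m (g' - g) v = gramMat m g' v := by
  ext i j
  simp [gramMat]

lemma gram_smul (C : ℝ) (g : LinearMap.BilinForm ℝ V) (v : Fin m → V) :
    gramMat m (C • g) v = C • gramMat m g v := by
  ext i j
  simp [gramMat]

end Aux

theorem comass_antitone {V : Type*} [AddCommGroup V] [Module ℝ V]
    [FiniteDimensional ℝ V] (m : ℕ) (hm : 1 ≤ m) (hm' : m ≤ Module.finrank ℝ V)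
    (g g' : LinearMap.BilinForm ℝ V)
    (hgsymm : g.IsSymm) (hgpos : ∀ v : V, v ≠ 0 → 0 < g v v)
    (hg'symm : g'.IsSymm) (hg'pos : ∀ v : V, v ≠ 0 → 0 < g' v v)
    (hle : ∀ v : V, g v v ≤ g' v v)
    (φ : V [⋀^Fin m]→ₗ[ℝ] ℝ) :
    comass m g' φ ≤ comass m g φ := by
  classical
  set Sg : Set ℝ := {x : ℝ | ∃ v : Fin m → V, (gramMat m g v).det ≠ 0 ∧
    x = φ v / Real.sqrt (gramMat m g v).det} with hSg
  set Sg' : Set ℝ := {x : ℝ | ∃ v : Fin m → V, (gramMat m g' v).det ≠ 0 ∧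
    x = φ v / Real.sqrt (gramMat m g' v).det} with hSg'
  have hcg : comass m g φ = sSup Sg := rfl
  have hcg' : comass m g' φ = sSup Sg' := rfl
  -- comparison constant
  obtain ⟨C, hC1, hCle⟩ := exists_comparison (lt_of_lt_of_le hm hm') hgsymm hgpos g'
  -- determinant facts for linearly independent tuples
  have hdets : ∀ v : Fin m → V, LinearIndependent ℝ v →
      0 < (gramMat m g v).det ∧ (gramMat m g v).det ≤ (gramMat m g' v).det ∧
      (gramMat m g' v).det ≤ C ^ m * (gramMat m g v).det := by
    intro v hv
    have hpd : (gramMat m g v).PosDef := gram_posDef hgsymm hgpos hv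
    have hpd' : (gramMat m g' v).PosDef := gram_posDef hg'symm hg'pos hv
    refine ⟨hpd.det_pos, ?_, ?_⟩
    · have hsub : (gramMat m (g' - g) v).PosSemidef := by
        refine gram_posSemidef (isSymm_sub hgsymm hg'symm) (fun u => ?_) v
        have := hle u
        simp only [LinearMap.sub_apply, map_sub]
        linarith [hle u]
      have := det_le_det_add_posSemidef hpd hsub
      rwa [gram_sub_add] at this
    · have hsub : (gramMat m (C • g - g') v).PosSemidef := by
        refine gram_posSemidef (isSymm_sub hg'symm (isSymm_smul hgsymm C)) (fun u => ?_) v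
        have := hCle u
        simp only [LinearMap.sub_apply, map_sub, LinearMap.smul_apply, smul_eq_mul]
        linarith
      have h2 := det_le_det_add_posSemidef hpd' hsub
      rw [gram_sub_add] at h2
      rwa [gram_smul, Matrix.det_smul, Fintype.card_fin] at h2
  -- sign normalization
  set i0 : Fin m := ⟨0, hm⟩
  have hsign : ∀ v : Fin m → V, ∃ w : Fin m → V,
      (gramMat m g w).det = (gramMat m g v).det ∧
      (gramMat m g' w).det = (gramMat m g' v).det ∧ φ w = |φ v| := by
    intro v
    rcases le_or_gt 0 (φ v) with h | h
    · exact ⟨v, rfl, rfl, (abs_of_nonneg h).symm⟩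
    · refine ⟨Function.update v i0 (-(v i0)), gram_update_neg g v i0,
        gram_update_neg g' v i0, ?_⟩
      rw [phi_update_neg, abs_of_neg h]
  -- a nonnegative element of Sg
  obtain ⟨y₀, hy₀mem, hy₀⟩ : ∃ y₀ ∈ Sg, 0 ≤ y₀ := by
    have b := Module.finBasis ℝ V
    set v₀ : Fin m → V := fun i => b (Fin.castLE hm' i) with hv₀
    have hli : LinearIndependent ℝ v₀ :=
      b.linearIndependent.comp _ (Fin.castLE_injective hm')
    obtain ⟨w, hw1, _, hw3⟩ := hsign v₀
    have hdet : (gramMat m g w).det ≠ 0 := by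
      rw [hw1]; exact (hdets v₀ hli).1.ne'
    refine ⟨φ w / Real.sqrt (gramMat m g w).det, ⟨w, hdet, rfl⟩, ?_⟩
    apply div_nonneg
    · rw [hw3]; exact abs_nonneg _
    · exact Real.sqrt_nonneg _
  rw [hcg, hcg']
  by_cases hbdd : BddAbove Sg
  · have h0 : 0 ≤ sSup Sg := le_trans hy₀ (le_csSup hbdd hy₀mem)
    refine Real.sSup_le (fun x hx => ?_) h0
    obtain ⟨v, hv', rfl⟩ := hx
    have hli : LinearIndependent ℝ v := linearIndependent_of_gram_det_ne_zero hv'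
    obtain ⟨hdg, hdgle, _⟩ := hdets v hli
    have hdg' : 0 < (gramMat m g' v).det := lt_of_lt_of_le hdg hdgle
    rcases le_or_gt (φ v) 0 with hφ | hφ
    · exact le_trans (div_nonpos_of_nonpos_of_nonneg hφ (Real.sqrt_nonneg _)) h0
    · have hy : φ v / Real.sqrt (gramMat m g v).det ∈ Sg := ⟨v, hdg.ne', rfl⟩
      refine le_trans ?_ (le_csSup hbdd hy)
      apply div_le_div_of_nonneg_left hφ.le (Real.sqrt_pos.mpr hdg)
      exact Real.sqrt_le_sqrt hdgle
  · rw [Real.sSup_of_not_bddAbove hbdd]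
    suffices h : ¬ BddAbove Sg' by
      rw [Real.sSup_of_not_bddAbove h]
    rintro ⟨bnd, hbnd⟩
    apply hbdd
    refine ⟨max (Real.sqrt (C ^ m) * max bnd 0) 0, fun y hy => ?_⟩
    obtain ⟨v, hvg, rfl⟩ := hy
    have hli : LinearIndependent ℝ v := linearIndependent_of_gram_det_ne_zero hvg
    obtain ⟨hdg, hdgle, hdgC⟩ := hdets v hli
    have hdg' : 0 < (gramMat m g' v).det := lt_of_lt_of_le hdg hdgle
    rcases le_or_gt (φ v) 0 with hφ | hφ
    · exact le_trans (div_nonpos_of_nonpos_of_nonneg hφ (Real.sqrt_nonneg _)) (le_max_right _ _)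
    · have hxmem : φ v / Real.sqrt (gramMat m g' v).det ∈ Sg' := ⟨v, hdg'.ne', rfl⟩
      have hxle : φ v / Real.sqrt (gramMat m g' v).det ≤ bnd := hbnd hxmem
      have hx0 : 0 ≤ φ v / Real.sqrt (gramMat m g' v).det :=
        div_nonneg hφ.le (Real.sqrt_nonneg _)
      have hCm0 : 0 ≤ C ^ m := pow_nonneg (by linarith) m
      have hsq : Real.sqrt (gramMat m g' v).det
          ≤ Real.sqrt (C ^ m) * Real.sqrt (gramMat m g v).det := by
        rw [← Real.sqrt_mul hCm0]
        exact Real.sqrt_le_sqrt hdgC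
      have hkey : φ v / Real.sqrt (gramMat m g v).det
          ≤ Real.sqrt (C ^ m) * (φ v / Real.sqrt (gramMat m g' v).det) := by
        rw [mul_div_assoc', div_le_div_iff₀ (Real.sqrt_pos.mpr hdg) (Real.sqrt_pos.mpr hdg')]
        calc φ v * Real.sqrt (gramMat m g' v).det
            ≤ φ v * (Real.sqrt (C ^ m) * Real.sqrt (gramMat m g v).det) :=
              mul_le_mul_of_nonneg_left hsq hφ.le
          _ = Real.sqrt (C ^ m) * φ v * Real.sqrt (gramMat m g v).det := by ring
      refine le_trans hkey (le_trans ?_ (le_max_left _ _))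
      apply mul_le_mul_of_nonneg_left _ (Real.sqrt_nonneg _)
      exact le_trans hxle (le_max_left _ _)
end

section
/- Let M be an m-dimensional linear subspace of E, let π : E →ₗ[ℝ] M be a linear projection onto M (π x = x for every x ∈ M), and let ω be an alternating m-form on M such that ω b = 1 for some orthonormal basis b of M. Then comass (π*ω) = 1 if and only if ker π = Mᗮ, the orthogonal complement of M in E. -/
open Matrix

/-- The Gram matrix of an `m`-tuple of vectors in a real inner product space. -/
noncomputable def gramIP {E : Type*} [NormedAddCommGroup E] [InnerProductSpace ℝ E]
    (m : ℕ) (v : Fin m → E) : Matrix (Fin m) (Fin m) ℝ :=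
  Matrix.of fun i j => (inner ℝ (v i) (v j) : ℝ)

/-- The comass of an alternating `m`-form on a real inner product space. -/
noncomputable def comassIP {E : Type*} [NormedAddCommGroup E] [InnerProductSpace ℝ E]
    (m : ℕ) (φ : E [⋀^Fin m]→ₗ[ℝ] ℝ) : ℝ :=
  sSup {x : ℝ | ∃ v : Fin m → E, (gramIP m v).det ≠ 0 ∧
    x = φ v / Real.sqrt (gramIP m v).det}

lemma gramIP_posSemidef {E : Type*} [NormedAddCommGroup E] [InnerProductSpace ℝ E]
    (m : ℕ) (v : Fin m → E) : (gramIP m v).PosSemidef := by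
  refine Matrix.PosSemidef.of_dotProduct_mulVec_nonneg ?_ ?_
  · ext i j
    simp [gramIP, Matrix.conjTranspose_apply, real_inner_comm]
  · intro x
    have h : dotProduct (star x) ((gramIP m v) *ᵥ x)
        = (inner ℝ (∑ i, x i • v i) (∑ j, x j • v j) : ℝ) := by
      simp [gramIP, dotProduct, Matrix.mulVec, inner_sum, sum_inner,
        real_inner_smul_left, real_inner_smul_right, Finset.mul_sum, mul_assoc, -inner_self_eq_norm_sq_to_K]
      rw [Finset.sum_comm]
      refine Finset.sum_congr rfl fun i _ => Finset.sum_congr rfl fun j _ => ?_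
      rw [real_inner_comm]; ring
    rw [h]
    exact real_inner_self_nonneg

lemma psd_det_nonneg {m : ℕ} {A : Matrix (Fin m) (Fin m) ℝ} (hA : A.PosSemidef) :
    0 ≤ A.det := by
  rw [hA.1.det_eq_prod_eigenvalues]
  exact Finset.prod_nonneg fun i _ => by exact_mod_cast hA.eigenvalues_nonneg i

lemma one_le_det_one_add {m : ℕ} {C : Matrix (Fin m) (Fin m) ℝ} (hC : C.PosSemidef) :
    1 ≤ (1 + C).det := by
  have hH : (1 + C).IsHermitian := (Matrix.isHermitian_one).add hC.1
  rw [hH.det_eq_prod_eigenvalues]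
  have key : ∀ i, 1 ≤ hH.eigenvalues i := by
    intro i
    set v := hH.eigenvectorBasis i with hv
    have hnorm : (inner ℝ (v : EuclideanSpace ℝ (Fin m)) v : ℝ) = 1 := by
      have := hH.eigenvectorBasis.orthonormal.1 i
      rw [real_inner_self_eq_norm_sq, this]; norm_num
    have hdot : dotProduct (star (⇑v)) (⇑v) = 1 := by
      rw [← hnorm]
      simp [PiLp.inner_apply, dotProduct, mul_comm, -inner_self_eq_norm_sq_to_K]
    have hmv : (1 + C) *ᵥ ⇑v = hH.eigenvalues i • ⇑v := hH.mulVec_eigenvectorBasis i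
    have hC2 : 0 ≤ dotProduct (star (⇑v)) (C *ᵥ ⇑v) := hC.dotProduct_mulVec_nonneg _
    have : dotProduct (star (⇑v)) ((1 + C) *ᵥ ⇑v) = hH.eigenvalues i := by
      rw [hmv, dotProduct_smul, hdot]; simp
    rw [Matrix.add_mulVec, Matrix.one_mulVec, dotProduct_add, hdot] at this
    linarith
  calc (1:ℝ) = ∏ _i : Fin m, 1 := by simp
    _ ≤ ∏ i, hH.eigenvalues i := Finset.prod_le_prod (by simp) (fun i _ => key i)

open scoped MatrixOrder in
lemma det_le_det_add {m : ℕ} {A B : Matrix (Fin m) (Fin m) ℝ}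
    (hA : A.PosSemidef) (hB : B.PosSemidef) : A.det ≤ (A + B).det := by
  by_cases hdet : A.det = 0
  · rw [hdet]; exact psd_det_nonneg (hA.add hB)
  · set S := CFC.sqrt A with hS
    have hSpsd : S.PosSemidef := (CFC.sqrt_nonneg A).posSemidef
    have hSS : S * S = A := CFC.sqrt_mul_sqrt_self A hA.nonneg
    have hdS : S.det ≠ 0 := fun h => hdet (by rw [← hSS, det_mul, h, mul_zero])
    have hSunit : IsUnit S.det := hdS.isUnit
    have hSinvH : S⁻¹.IsHermitian := hSpsd.1.inv
    have hCpsd : (S⁻¹ * B * S⁻¹).PosSemidef := by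
      have := hB.mul_mul_conjTranspose_same S⁻¹
      rwa [hSinvH.eq] at this
    have hfact : A + B = S * (1 + S⁻¹ * B * S⁻¹) * S := by
      rw [Matrix.mul_add, Matrix.mul_one, Matrix.add_mul, hSS]
      congr 1
      rw [← Matrix.mul_assoc, ← Matrix.mul_assoc, Matrix.mul_nonsing_inv _ hSunit,
        Matrix.one_mul, Matrix.mul_assoc, Matrix.nonsing_inv_mul _ hSunit, Matrix.mul_one]
    have hApos : 0 < A.det := lt_of_le_of_ne (psd_det_nonneg hA) (Ne.symm hdet)
    calc A.det = A.det * 1 := (mul_one _).symm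
      _ ≤ A.det * (1 + S⁻¹ * B * S⁻¹).det :=
          mul_le_mul_of_nonneg_left (one_le_det_one_add hCpsd) hApos.le
      _ = (A + B).det := by
          rw [hfact, det_mul, det_mul, ← hSS, det_mul]; ring

lemma gram_det_eq_sq {F : Type*} [NormedAddCommGroup F] [InnerProductSpace ℝ F]
    (m : ℕ) (b : OrthonormalBasis (Fin m) ℝ F) (u : Fin m → F) :
    (gramIP m u).det = (b.toBasis.det u) ^ 2 := by
  have hG : gramIP m u = (b.toBasis.toMatrix u)ᵀ * (b.toBasis.toMatrix u) := by
    ext i j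
    simp only [gramIP, Matrix.of_apply, Matrix.mul_apply, Matrix.transpose_apply,
      Module.Basis.toMatrix_apply, OrthonormalBasis.coe_toBasis_repr_apply,
      OrthonormalBasis.repr_apply_apply]
    rw [← OrthonormalBasis.sum_inner_mul_inner b (u i) (u j)]
    refine Finset.sum_congr rfl fun k _ => ?_
    rw [real_inner_comm (b k) (u i)]
  rw [hG, det_mul, det_transpose, ← Module.Basis.det_apply, sq]

/-- Comass One Lemma: the pullback of the volume form has comass one iff the
fiber (the kernel of the projection) is perpendicular to `M`. -/
theorem comass_pullback_eq_one_iff {E : Type*} [NormedAddCommGroup E]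
    [InnerProductSpace ℝ E] [FiniteDimensional ℝ E]
    (m : ℕ) (hm : 1 ≤ m) (hm' : m ≤ Module.finrank ℝ E)
    (M : Submodule ℝ E) (hM : Module.finrank ℝ M = m)
    (π : E →ₗ[ℝ] M) (hπ : ∀ x : M, π (x : E) = x)
    (ω : M [⋀^Fin m]→ₗ[ℝ] ℝ)
    (b : OrthonormalBasis (Fin m) ℝ M) (hω : ω ⇑b = 1) :
    comassIP m (ω.compLinearMap π) = 1 ↔ LinearMap.ker π = Mᗮ := by
  set φ := ω.compLinearMap π with hφdef
  set S := {x : ℝ | ∃ v : Fin m → E, (gramIP m v).det ≠ 0 ∧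
    x = φ v / Real.sqrt (gramIP m v).det} with hSdef
  have hcomass : comassIP m φ = sSup S := rfl
  -- ω equals the determinant form of b
  have hωdet : ω = b.toBasis.det := by
    have h1 := ω.eq_smul_basis_det b.toBasis
    rwa [OrthonormalBasis.coe_toBasis, hω, one_smul] at h1
  -- Gram determinant of tuples in M
  have hcoe : ∀ u : Fin m → M, gramIP m (fun i => ((u i : E))) = gramIP m u := by
    intro u; ext i j
    simp [gramIP, Submodule.coe_inner]
  have hgram : ∀ u : Fin m → M, (gramIP m (fun i => ((u i : E)))).det = (ω u) ^ 2 := by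
    intro u
    rw [hcoe, gram_det_eq_sq m b u, hωdet]
  -- the value 1 is attained
  have hb1 : gramIP m (fun i => ((b i : E))) = 1 := by
    ext i j
    have := b.orthonormal
    rw [orthonormal_iff_ite] at this
    simp only [gramIP, Matrix.of_apply, Matrix.one_apply, ← Submodule.coe_inner, this i j]
  have hφb : φ (fun i => ((b i : E))) = 1 := by
    show ω (fun i => π ((b i : E))) = 1
    rw [show (fun i => π ((b i : E))) = ⇑b from funext fun i => hπ (b i), hω]
  have hmem : (1 : ℝ) ∈ S := by
    refine ⟨fun i => ((b i : E)), ?_, ?_⟩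
    · rw [hb1, det_one]; norm_num
    · rw [hφb, hb1, det_one, Real.sqrt_one, div_one]
  constructor
  · -- comass = 1 → ker π = Mᗮ
    intro h
    have hsurj : Function.Surjective π := fun y => ⟨(y : E), hπ y⟩
    have hle : LinearMap.ker π ≤ Mᗮ := by
      intro k hk
      by_contra hk2
      have hπk : π k = 0 := hk
      -- some coefficient is nonzero
      have hcne : ∃ i, (inner ℝ ((b i : E)) k : ℝ) ≠ 0 := by
        by_contra hc0
        push_neg at hc0
        apply hk2
        rw [Submodule.mem_orthogonal]
        intro x hx
        have hxsum : (x : E) = ∑ i, b.repr ⟨x, hx⟩ i • ((b i : E)) := by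
          have := b.sum_repr ⟨x, hx⟩
          calc x = ((⟨x, hx⟩ : M) : E) := rfl
            _ = ((∑ i, b.repr ⟨x, hx⟩ i • b i : M) : E) := by rw [this]
            _ = ∑ i, b.repr ⟨x, hx⟩ i • ((b i : E)) := by push_cast; rfl
        rw [hxsum, sum_inner]
        refine Finset.sum_eq_zero fun i _ => ?_
        rw [real_inner_smul_left, hc0 i, mul_zero]
      set c : Fin m → ℝ := fun i => (inner ℝ ((b i : E)) k : ℝ) with hc
      obtain ⟨i0, hi0⟩ := hcne
      obtain ⟨C, hC, hCpos⟩ : ∃ C : ℝ, C = ∑ i, c i ^ 2 ∧ 0 < C := by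
        refine ⟨∑ i, c i ^ 2, rfl, ?_⟩
        refine Finset.sum_pos' (fun i _ => sq_nonneg _) ⟨i0, Finset.mem_univ _, ?_⟩
        have : c i0 ≠ 0 := hi0
        positivity
      obtain ⟨K, hKdef, hKnn⟩ : ∃ K : ℝ, K = ‖k‖ ^ 2 ∧ 0 ≤ K := ⟨_, rfl, sq_nonneg _⟩
      obtain ⟨δ, hδpos, hδ1, hδ2⟩ :
          ∃ δ : ℝ, 0 < δ ∧ δ * (K + 1) ≤ 1 ∧ δ * (4 * C + 1) ≤ 1 := by
        refine ⟨min (1 / (K + 1)) (1 / (4 * C + 1)), lt_min (by positivity) (by positivity),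
          ?_, ?_⟩
        · have h1 : min (1 / (K + 1)) (1 / (4 * C + 1)) ≤ 1 / (K + 1) := min_le_left _ _
          calc min (1 / (K + 1)) (1 / (4 * C + 1)) * (K + 1) ≤ (1 / (K + 1)) * (K + 1) :=
                mul_le_mul_of_nonneg_right h1 (by positivity)
            _ = 1 := by field_simp
        · have h1 : min (1 / (K + 1)) (1 / (4 * C + 1)) ≤ 1 / (4 * C + 1) := min_le_right _ _
          calc min (1 / (K + 1)) (1 / (4 * C + 1)) * (4 * C + 1) ≤
                (1 / (4 * C + 1)) * (4 * C + 1) :=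
                mul_le_mul_of_nonneg_right h1 (by positivity)
            _ = 1 := by field_simp
      obtain ⟨t, s, ht, hs⟩ : ∃ t s : ℝ, t = -δ ∧ s = 2 * t + t ^ 2 * K := ⟨-δ, _, rfl, rfl⟩
      have hδK : δ * K ≤ 1 := by
        have hr : δ * (K + 1) = δ * K + δ := by ring
        rw [hr] at hδ1
        linarith
      have hs_ub : s ≤ -δ := by
        have h2 : δ ^ 2 * K = δ * (δ * K) := by ring
        have h3 : δ * (δ * K) ≤ δ * 1 := mul_le_mul_of_nonneg_left hδK hδpos.le
        rw [hs, ht]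
        have h4 : (-δ : ℝ) ^ 2 * K = δ ^ 2 * K := by ring
        rw [h4, h2]
        linarith
      have hs_lb : -2 * δ ≤ s := by
        have h2 : 0 ≤ δ ^ 2 * K := mul_nonneg (sq_nonneg δ) hKnn
        rw [hs, ht]
        have h4 : (-δ : ℝ) ^ 2 * K = δ ^ 2 * K := by ring
        rw [h4]
        linarith
      have hs1 : s * C < 0 :=
        mul_neg_of_neg_of_pos (lt_of_le_of_lt hs_ub (by linarith)) hCpos
      have hs2 : -1 < s * C := by
        have h4 : (-2 * δ) * C ≤ s * C := mul_le_mul_of_nonneg_right hs_lb hCpos.le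
        have h5 : δ * (4 * C + 1) = 4 * (δ * C) + δ := by ring
        rw [h5] at hδ2
        have h6 : (-2 * δ) * C = -(2 * (δ * C)) := by ring
        rw [h6] at h4
        linarith
      set v : Fin m → E := fun i => ((b i : E)) + (t * c i) • k with hv
      have hbij : ∀ i j : Fin m, (inner ℝ ((b i : E)) ((b j : E)) : ℝ)
          = if i = j then 1 else 0 := by
        intro i j
        have horth := b.orthonormal
        rw [orthonormal_iff_ite] at horth
        rw [← Submodule.coe_inner, horth i j]
      have hentry : ∀ i j, (inner ℝ (v i) (v j) : ℝ)
          = (if i = j then 1 else 0) + s * c i * c j := by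
        intro i j
        show (inner ℝ (((b i : E)) + (t * c i) • k) (((b j : E)) + (t * c j) • k) : ℝ) = _
        rw [inner_add_left, inner_add_right, inner_add_right, real_inner_smul_left,
          real_inner_smul_left, real_inner_smul_right, real_inner_smul_right,
          real_inner_self_eq_norm_sq, hbij i j]
        have e1 : (inner ℝ ((b i : E)) k : ℝ) = c i := rfl
        have e2 : (inner ℝ k ((b j : E)) : ℝ) = c j := by
          rw [real_inner_comm]
        rw [e1, e2, hs, ← hKdef]
        ring
      have hG : gramIP m v = 1 + Matrix.replicateCol Unit (fun i => s * c i) * Matrix.replicateRow Unit c := by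
        ext i j
        have rhs : ((1 : Matrix (Fin m) (Fin m) ℝ) + Matrix.replicateCol Unit (fun i => s * c i) * Matrix.replicateRow Unit c) i j
            = (if i = j then 1 else 0) + s * c i * c j := by
          simp [Matrix.add_apply, Matrix.one_apply, Matrix.mul_apply, Matrix.replicateCol_apply,
            Matrix.replicateRow_apply]
        rw [rhs]
        exact hentry i j
      have hdetv : (gramIP m v).det = 1 + s * C := by
        rw [hG, det_one_add_replicateCol_mul_replicateRow]
        congr 1
        rw [hC]
        calc (dotProduct c fun i => s * c i) = ∑ i, c i * (s * c i) := rfl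
          _ = s * ∑ i, c i ^ 2 := by
              rw [Finset.mul_sum]
              exact Finset.sum_congr rfl fun i _ => by ring
      have hφv : φ v = 1 := by
        show ω (fun i => π (v i)) = 1
        have : (fun i => π (v i)) = ⇑b := by
          funext i
          show π (((b i : E)) + (t * c i) • k) = b i
          rw [map_add, LinearMap.map_smul, hπ (b i), hπk, smul_zero, add_zero]
        rw [this, hω]
      have hdpos : 0 < 1 + s * C := by linarith
      have hdlt : 1 + s * C < 1 := by linarith
      have hxmem : 1 / Real.sqrt (1 + s * C) ∈ S := by
        refine ⟨v, ?_, ?_⟩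
        · rw [hdetv]; exact ne_of_gt hdpos
        · rw [hφv, hdetv]
      have hsq1 : Real.sqrt (1 + s * C) < 1 := by
        calc Real.sqrt (1 + s * C) < Real.sqrt 1 := Real.sqrt_lt_sqrt hdpos.le hdlt
          _ = 1 := Real.sqrt_one
      have hsqpos : 0 < Real.sqrt (1 + s * C) := Real.sqrt_pos.mpr hdpos
      have hxgt : 1 < 1 / Real.sqrt (1 + s * C) := one_lt_one_div hsqpos hsq1
      by_cases hbdd : BddAbove S
      · have hle1 := le_csSup hbdd hxmem
        rw [← hcomass, h] at hle1
        linarith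
      · rw [hcomass, csSup_of_not_bddAbove hbdd, Real.sSup_empty] at h
        norm_num at h
    have hdim : Module.finrank ℝ Mᗮ ≤ Module.finrank ℝ (LinearMap.ker π) := by
      have h1 := Submodule.finrank_add_finrank_orthogonal M
      have h2 := LinearMap.finrank_range_add_finrank_ker π
      have h3 : LinearMap.range π = ⊤ := LinearMap.range_eq_top.mpr hsurj
      rw [h3, finrank_top] at h2
      omega
    exact Submodule.eq_of_le_of_finrank_le hle hdim
  · -- ker π = Mᗮ → comass = 1
    intro h
    rw [hcomass]
    refine IsGreatest.csSup_eq ⟨hmem, ?_⟩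
    rintro x ⟨v, hdet, rfl⟩
    set u : Fin m → M := fun i => π (v i) with hu
    have hw : ∀ i, v i - ((u i : E)) ∈ Mᗮ := by
      intro i
      rw [← h, LinearMap.mem_ker, map_sub, hπ (u i), sub_self]
    have hsplit : gramIP m v
        = gramIP m (fun i => ((u i : E))) + gramIP m (fun i => v i - ((u i : E))) := by
      ext i j
      have hvi : v i = ((u i : E)) + (v i - ((u i : E))) := by abel
      have hvj : v j = ((u j : E)) + (v j - ((u j : E))) := by abel
      have h1 : (inner ℝ ((u i : E)) (v j - ((u j : E))) : ℝ) = 0 :=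
        Submodule.inner_right_of_mem_orthogonal (u i).2 (hw j)
      have h2 : (inner ℝ (v i - ((u i : E))) ((u j : E)) : ℝ) = 0 :=
        Submodule.inner_left_of_mem_orthogonal (u j).2 (hw i)
      simp only [gramIP, Matrix.of_apply, Matrix.add_apply]
      rw [hvi, hvj, inner_add_left, inner_add_right, inner_add_right, h1, h2]
      have e : ∀ x y : E, x + y - x = y := fun x y => by abel
      rw [e, e]
      ring
    have hAle : (gramIP m (fun i => ((u i : E)))).det ≤ (gramIP m v).det := by
      rw [hsplit]
      exact det_le_det_add (gramIP_posSemidef _ _) (gramIP_posSemidef _ _)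
    have hpos : 0 < (gramIP m v).det :=
      lt_of_le_of_ne (psd_det_nonneg (gramIP_posSemidef _ _)) (Ne.symm hdet)
    rw [div_le_one (Real.sqrt_pos.mpr hpos)]
    have hφv : φ v = ω u := rfl
    calc φ v = ω u := hφv
      _ ≤ |ω u| := le_abs_self _
      _ = Real.sqrt ((ω u) ^ 2) := (Real.sqrt_sq_eq_abs _).symm
      _ = Real.sqrt (gramIP m (fun i => ((u i : E)))).det := by rw [hgram u]
      _ ≤ Real.sqrt (gramIP m v).det := Real.sqrt_le_sqrt hAle
end

section
/- Let E be a finite-dimensional real inner product space, M a real inner product space of finite dimension m ≥ 1, and π : E →ₗ[ℝ] M a surjective linear map with kernel F such that ⟪π x, π y⟫ = ⟪x, y⟫ for all x, y in the orthogonal complement Fᗮ. Let ω be an alternating m-form on M with ω b = 1 for some orthonormal basis b of M. Then for every m-tuple v : Fin m → E with det (G v) = 1 and (π*ω) v = 1, one has v i ∈ Fᗮ for every i; that is, the unit simple m-vectors on which π*ω attains the value 1 are exactly the horizontal ones. -/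
open Matrix

lemma aux2 {m : ℕ} {N : Matrix (Fin m) (Fin m) ℝ} (hN : N.PosSemidef)
    (h : (1 + N).det = 1) : N = 0 := by
  have hH := hN.1
  set U : Matrix (Fin m) (Fin m) ℝ := (hH.eigenvectorUnitary : Matrix (Fin m) (Fin m) ℝ) with hUdef
  have hU : U * star U = 1 := Matrix.mem_unitaryGroup_iff.mp hH.eigenvectorUnitary.2
  have hspec : N = U * diagonal (RCLike.ofReal ∘ hH.eigenvalues) * star U := hH.spectral_theorem
  have key : (1 : Matrix (Fin m) (Fin m) ℝ) + N
      = U * (1 + diagonal (RCLike.ofReal ∘ hH.eigenvalues)) * star U := by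
    rw [mul_add, add_mul, mul_one, hU, ← hspec]
  have hdet : (1 + N).det = ∏ i, (1 + hH.eigenvalues i) := by
    rw [key, det_mul_right_comm, hU, one_mul]
    simp only [RCLike.ofReal_real_eq_id, Function.comp_def, id_eq]
    rw [← diagonal_one, diagonal_add, det_diagonal]
  rw [hdet] at h
  have hnn := hN.eigenvalues_nonneg
  have heig : ∀ i, hH.eigenvalues i = 0 := by
    intro i
    by_contra hi
    have hipos : 0 < hH.eigenvalues i := lt_of_le_of_ne (hnn i) (Ne.symm hi)
    have h1 : (1 : ℝ) ≤ ∏ j ∈ Finset.univ.erase i, (1 + hH.eigenvalues j) := by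
      calc (1:ℝ) = ∏ _j ∈ Finset.univ.erase i, (1:ℝ) := by simp
      _ ≤ ∏ j ∈ Finset.univ.erase i, (1 + hH.eigenvalues j) :=
        Finset.prod_le_prod (fun j _ => by norm_num) (fun j _ => by linarith [hnn j])
    have h2 : ∏ j, (1 + hH.eigenvalues j)
        = (1 + hH.eigenvalues i) * ∏ j ∈ Finset.univ.erase i, (1 + hH.eigenvalues j) :=
      (Finset.mul_prod_erase _ _ (Finset.mem_univ i)).symm
    nlinarith
  have : diagonal (RCLike.ofReal ∘ hH.eigenvalues) = (0 : Matrix (Fin m) (Fin m) ℝ) := by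
    simp only [RCLike.ofReal_real_eq_id, Function.comp_def, id_eq]
    rw [funext heig]
    simp [diagonal_zero]
  rw [hspec, this, mul_zero, zero_mul]

open scoped MatrixOrder in
lemma aux3 {m : ℕ} {A B : Matrix (Fin m) (Fin m) ℝ} (hA : A.PosSemidef) (hB : B.PosSemidef)
    (hdet : (A + B).det = 1) (hdetB : B.det = 1) : A = 0 := by
  set S := CFC.sqrt B with hSdef
  have hS : S.PosSemidef := (CFC.sqrt_nonneg B).posSemidef
  have hSS : S * S = B := CFC.sqrt_mul_sqrt_self B hB.nonneg
  have hdetS : S.det * S.det = 1 := by rw [← det_mul, hSS, hdetB]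
  have hdu : IsUnit S.det := IsUnit.of_mul_eq_one _ hdetS
  set T := S⁻¹ with hTdef
  have hTS : T * S = 1 := nonsing_inv_mul _ hdu
  have hST : S * T = 1 := mul_nonsing_inv _ hdu
  have hTH : T.IsHermitian := hS.1.inv
  have hN : (T * A * T).PosSemidef := by
    have := hA.mul_mul_conjTranspose_same T
    rwa [hTH.eq] at this
  have hTBT : T * B * T = 1 := by
    rw [← hSS, show T * (S * S) * T = (T * S) * (S * T) by noncomm_ring, hTS, hST, one_mul]
  have key : (1 : Matrix (Fin m) (Fin m) ℝ) + T * A * T = T * (A + B) * T := by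
    rw [mul_add, add_mul, hTBT, add_comm]
  have hdet1 : ((1 : Matrix (Fin m) (Fin m) ℝ) + T * A * T).det = 1 := by
    rw [key, det_mul, det_mul, hdet, mul_one]
    have : S.det * T.det = 1 := by rw [← det_mul, hST, det_one]
    nlinarith [hdetS]
  have hN0 : T * A * T = 0 := aux2 hN hdet1
  have : S * (T * A * T) * S = A := by
    rw [show S * (T * A * T) * S = (S * T) * A * (T * S) by noncomm_ring, hST, hTS, one_mul, mul_one]
  rw [← this, hN0, mul_zero, zero_mul]

/-- The unit simple `m`-vectors on which the pullback form attains the value one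
are exactly the horizontal ones. -/
theorem pullback_eq_one_horizontal {E M : Type*}
    [NormedAddCommGroup E] [InnerProductSpace ℝ E] [FiniteDimensional ℝ E]
    [NormedAddCommGroup M] [InnerProductSpace ℝ M] [FiniteDimensional ℝ M]
    (m : ℕ) (hm : 1 ≤ m) (hM : Module.finrank ℝ M = m)
    (π : E →ₗ[ℝ] M) (hsurj : Function.Surjective π)
    (hiso : ∀ x ∈ (LinearMap.ker π)ᗮ, ∀ y ∈ (LinearMap.ker π)ᗮ,
      (inner ℝ (π x) (π y) : ℝ) = (inner ℝ x y : ℝ))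
    (ω : M [⋀^Fin m]→ₗ[ℝ] ℝ)
    (b : OrthonormalBasis (Fin m) ℝ M) (hω : ω ⇑b = 1) :
    ∀ v : Fin m → E, (gramIP m v).det = 1 → (ω.compLinearMap π) v = 1 →
      ∀ i, v i ∈ (LinearMap.ker π)ᗮ := by
  intro v hdet hval
  set F := LinearMap.ker π with hF
  set q : Fin m → E := fun i => (Fᗮ.orthogonalProjectionOnto (v i) : E) with hqdef
  set p : Fin m → E := fun i => v i - q i with hpdef
  have hqmem : ∀ i, q i ∈ Fᗮ := fun i => SetLike.coe_mem _
  have hpmem : ∀ i, p i ∈ F := by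
    intro i
    have h1 : v i - q i ∈ Fᗮᗮ := Submodule.sub_starProjection_mem_orthogonal (K := Fᗮ) (v i)
    rwa [Submodule.orthogonal_orthogonal] at h1
  have hπp : ∀ i, π (p i) = 0 := fun i => LinearMap.mem_ker.mp (hpmem i)
  have hv : ∀ i, v i = p i + q i := fun i => (sub_add_cancel (v i) (q i)).symm
  -- cross terms vanish
  have hcross : ∀ i j, (inner ℝ (p i) (q j) : ℝ) = 0 := fun i j =>
    Submodule.inner_right_of_mem_orthogonal (hpmem i) (hqmem j)
  have hinner : ∀ i j, (inner ℝ (v i) (v j) : ℝ)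
      = (inner ℝ (p i) (p j) : ℝ) + (inner ℝ (q i) (q j) : ℝ) := by
    intro i j
    have h2 : (inner ℝ (q i) (p j) : ℝ) = 0 := by
      rw [real_inner_comm]; exact hcross j i
    rw [hv i, hv j, inner_add_left, inner_add_right, inner_add_right, hcross i j, h2]
    ring
  have hsplit : gramIP m v = gramIP m p + gramIP m q := by
    ext i j
    simp [gramIP, hinner i j]
  -- π ∘ v and its Gram
  have hπv : ∀ i, π (v i) = π (q i) := by
    intro i
    rw [hv i, map_add, hπp i, zero_add]
  have hGq : gramIP m (fun i => π (v i)) = gramIP m q := by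
    ext i j
    simp only [gramIP, Matrix.of_apply, hπv]
    exact hiso _ (hqmem i) _ (hqmem j)
  -- determinant of coordinate matrix
  have hval' : ω (fun i => π (v i)) = 1 := hval
  have hdetA : (b.toBasis.toMatrix (fun i => π (v i))).det = 1 := by
    have h1 := ω.eq_smul_basis_det b.toBasis
    have h2 : ω (fun i => π (v i))
        = ω ⇑b.toBasis * b.toBasis.det (fun i => π (v i)) := by
      conv_lhs => rw [h1]
      simp
    rw [hval', OrthonormalBasis.coe_toBasis, hω, one_mul, Module.Basis.det_apply] at h2
    exact h2.symm
  have hGw : gramIP m (fun i => π (v i))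
      = (b.toBasis.toMatrix (fun i => π (v i)))ᵀ * (b.toBasis.toMatrix (fun i => π (v i))) := by
    ext i j
    simp only [gramIP, Matrix.of_apply, Matrix.mul_apply, Matrix.transpose_apply,
      Module.Basis.toMatrix_apply, OrthonormalBasis.coe_toBasis_repr_apply,
      OrthonormalBasis.repr_apply_apply]
    calc (inner ℝ (π (v i)) (π (v j)) : ℝ)
        = ∑ k, (inner ℝ (π (v i)) (b k) : ℝ) * (inner ℝ (b k) (π (v j)) : ℝ) :=
          (b.sum_inner_mul_inner _ _).symm
      _ = ∑ k, (inner ℝ (b k) (π (v i)) : ℝ) * (inner ℝ (b k) (π (v j)) : ℝ) := by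
          simp_rw [real_inner_comm]
  have hdetGq : (gramIP m q).det = 1 := by
    rw [← hGq, hGw, det_mul, det_transpose, hdetA, one_mul]
  -- conclude Gram p = 0
  have hp0 : gramIP m p = 0 := by
    apply aux3 (gramIP_posSemidef m p) (gramIP_posSemidef m q) _ hdetGq
    rw [← hsplit, hdet]
  intro i
  have : (inner ℝ (p i) (p i) : ℝ) = 0 := by
    have := congrFun (congrFun hp0 i) i
    simpa [gramIP] using this
  have hpi : p i = 0 := by rwa [inner_self_eq_zero] at this
  rw [hv i, hpi, zero_add]
  exact hqmem i
end
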